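/- Let X be a metric space, 𝓑 a bornology on X, and F a nonzero continuous linear functional on (C(X), τ_𝓑) that is supported on closed sets A and B in 𝓑. Then A ∩ B is nonempty and F is supported on A ∩ B. -/

import Mathlib

open Set Filter

def IsBorn {X : Type*} [MetricSpace X] (𝓑 : Set (Set X)) : Prop :=
  (∀ x : X, ∃ B ∈ 𝓑, x ∈ B) ∧
  (∀ A B : Set X, A ∈ 𝓑 → B ∈ 𝓑 → A ∪ B ∈ 𝓑) ∧
  (∀ A B : Set X, B ∈ 𝓑 → A ⊆ B → A.Nonempty → A ∈ 𝓑)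

def topOfBorn {X : Type*} [MetricSpace X] (𝓑 : Set (Set X)) : TopologicalSpace C(X, ℝ) :=
  TopologicalSpace.mkOfNhds fun f =>
    ⨅ B ∈ 𝓑, ⨅ ε : {e : ℝ // 0 < e}, 𝓟 {g : C(X, ℝ) | ∀ x ∈ B, |f x - g x| < ε.1}

/-- Key construction: given closed nonempty `A, B` and `f` vanishing on `A ∩ B`,
there is a continuous `H` with `H = f` on `A` and `H = 0` on `B`. -/
lemma exists_split {X : Type*} [MetricSpace X] {A B : Set X}
    (hA : IsClosed A) (hB : IsClosed B) (hAne : A.Nonempty) (hBne : B.Nonempty)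
    (f : C(X, ℝ)) (hf : ∀ x ∈ A ∩ B, f x = 0) :
    ∃ H : C(X, ℝ), (∀ x ∈ A, H x = f x) ∧ (∀ x ∈ B, H x = 0) := by
  classical
  set H : X → ℝ := fun x =>
    f x * (Metric.infDist x B / (Metric.infDist x A + Metric.infDist x B)) with hHdef
  have hratio : ∀ y : X,
      |Metric.infDist y B / (Metric.infDist y A + Metric.infDist y B)| ≤ 1 := by
    intro y
    rw [abs_le]
    constructor
    · have : (0:ℝ) ≤ Metric.infDist y B / (Metric.infDist y A + Metric.infDist y B) :=
        div_nonneg Metric.infDist_nonneg (add_nonneg Metric.infDist_nonneg Metric.infDist_nonneg)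
      linarith
    · exact div_le_one_of_le₀ (by linarith [Metric.infDist_nonneg (x := y) (s := A)])
        (add_nonneg Metric.infDist_nonneg Metric.infDist_nonneg)
  have hbound : ∀ y : X, ‖H y‖ ≤ |f y| := by
    intro y
    rw [hHdef]
    calc ‖f y * _‖ = |f y| * |Metric.infDist y B / (Metric.infDist y A + Metric.infDist y B)| :=
          abs_mul _ _
      _ ≤ |f y| * 1 := mul_le_mul_of_nonneg_left (hratio y) (abs_nonneg _)
      _ = |f y| := mul_one _
  have hcont : Continuous H := by
    rw [continuous_iff_continuousAt]
    intro x
    by_cases hx : Metric.infDist x A + Metric.infDist x B = 0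
    · -- x ∈ A ∩ B, so f x = 0 and H x = 0; squeeze
      have h1 : Metric.infDist x A = 0 := by
        have := Metric.infDist_nonneg (x := x) (s := A)
        have := Metric.infDist_nonneg (x := x) (s := B)
        linarith
      have h2 : Metric.infDist x B = 0 := by
        have := Metric.infDist_nonneg (x := x) (s := A)
        linarith
      have hxA : x ∈ A := (hA.mem_iff_infDist_zero hAne).2 h1
      have hxB : x ∈ B := (hB.mem_iff_infDist_zero hBne).2 h2
      have hfx : f x = 0 := hf x ⟨hxA, hxB⟩
      have hHx : H x = 0 := by simp [hHdef, hfx]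
      rw [ContinuousAt, hHx]
      apply squeeze_zero_norm hbound
      have : Tendsto (fun y => |f y|) (nhds x) (nhds |f x|) :=
        (f.continuous.abs.tendsto x)
      rwa [hfx, abs_zero] at this
    · exact (f.continuous.continuousAt).mul
        (((Metric.continuous_infDist_pt B).continuousAt).div
          (((Metric.continuous_infDist_pt A).add (Metric.continuous_infDist_pt B)).continuousAt)
          hx)
  refine ⟨⟨H, hcont⟩, ?_, ?_⟩
  · intro x hxA
    by_cases hxB : x ∈ B
    · have hfx : f x = 0 := hf x ⟨hxA, hxB⟩
      simp [hHdef, hfx]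
    · have h1 : Metric.infDist x A = 0 := Metric.infDist_zero_of_mem hxA
      have h2 : 0 < Metric.infDist x B := (hB.notMem_iff_infDist_pos hBne).1 hxB
      show H x = f x
      rw [hHdef]
      field_simp [h1]
      rw [h1, zero_add]
  · intro x hxB
    have h2 : Metric.infDist x B = 0 := Metric.infDist_zero_of_mem hxB
    show H x = 0
    simp [hHdef, h2]

/-- if a nonzero continuous linear functional `F` on `(C(X), τ_𝓑)` is
supported on closed sets `A, B ∈ 𝓑`, then `A ∩ B ≠ ∅` and `F` is supported on `A ∩ B`. -/
theorem supported_inter {X : Type*} [MetricSpace X] (𝓑 : Set (Set X))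
    (h𝓑 : IsBorn 𝓑) (F : C(X, ℝ) →ₗ[ℝ] ℝ)
    (hF : @Continuous C(X, ℝ) ℝ (topOfBorn 𝓑) _ F) (hF0 : F ≠ 0)
    (A B : Set X) (hA𝓑 : A ∈ 𝓑) (hB𝓑 : B ∈ 𝓑) (hA : IsClosed A) (hB : IsClosed B)
    (hsuppA : ∀ f : C(X, ℝ), (∀ x ∈ A, f x = 0) → F f = 0)
    (hsuppB : ∀ f : C(X, ℝ), (∀ x ∈ B, f x = 0) → F f = 0) :
    (A ∩ B).Nonempty ∧ ∀ f : C(X, ℝ), (∀ x ∈ A ∩ B, f x = 0) → F f = 0 := by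
  rcases A.eq_empty_or_nonempty with hAe | hAne
  · exact absurd (LinearMap.ext fun f => hsuppA f (fun x hx => by simp [hAe] at hx)) hF0
  rcases B.eq_empty_or_nonempty with hBe | hBne
  · exact absurd (LinearMap.ext fun f => hsuppB f (fun x hx => by simp [hBe] at hx)) hF0
  have key : ∀ f : C(X, ℝ), (∀ x ∈ A ∩ B, f x = 0) → F f = 0 := by
    intro f hf
    obtain ⟨H, hHA, hHB⟩ := exists_split hA hB hAne hBne f hf
    have h1 : F (f - H) = 0 := hsuppA (f - H) (fun x hx => by
      simp [ContinuousMap.sub_apply, hHA x hx])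
    have h2 : F H = 0 := hsuppB H hHB
    have : F f - F H = 0 := by rw [← map_sub]; exact h1
    linarith
  refine ⟨?_, key⟩
  by_contra hne
  rw [Set.not_nonempty_iff_eq_empty] at hne
  exact hF0 (LinearMap.ext fun f => key f (fun x hx => by simp [hne] at hx))
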